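/- For any u ∈ (0, π) and v ∈ (0, 1), the function v ↦ v·cot(v·u) − cot(u) is nonincreasing in v; equivalently, d/dv [v cot(vu) − cot u] ≤ 0. -/

import Mathlib

open Real Set

lemma aux_hasDerivAt (x : ℝ) (hs : Real.sin x ≠ 0) :
    HasDerivAt (fun x : ℝ => x * Real.cos x / Real.sin x)
      ((Real.sin x * Real.cos x - x) / Real.sin x ^ 2) x := by
  have h1 : HasDerivAt (fun x : ℝ => x * Real.cos x)
      (1 * Real.cos x + x * (-Real.sin x)) x :=
    (hasDerivAt_id x).mul (Real.hasDerivAt_cos x)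
  have h2 := h1.div (Real.hasDerivAt_sin x) hs
  refine h2.congr_deriv (Eq.symm ?_)
  have hp : Real.sin x ^ 2 + Real.cos x ^ 2 = 1 := Real.sin_sq_add_cos_sq x
  rw [div_left_inj' (pow_ne_zero 2 hs)]
  linear_combination x * hp

lemma aux_anti : AntitoneOn (fun x : ℝ => x * Real.cot x) (Ioo 0 π) := by
  have heq : ∀ x ∈ Ioo (0:ℝ) π, x * Real.cot x = x * Real.cos x / Real.sin x := by
    intro x hx
    rw [Real.cot_eq_cos_div_sin]; ring
  have hsin : ∀ x ∈ Ioo (0:ℝ) π, Real.sin x ≠ 0 := fun x hx =>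
    ne_of_gt (Real.sin_pos_of_pos_of_lt_pi hx.1 hx.2)
  have key : AntitoneOn (fun x : ℝ => x * Real.cos x / Real.sin x) (Ioo 0 π) := by
    apply antitoneOn_of_deriv_nonpos (convex_Ioo 0 π)
    · exact ContinuousOn.div (continuousOn_id.mul (Real.continuous_cos.continuousOn))
        Real.continuous_sin.continuousOn hsin
    · intro x hx
      rw [interior_Ioo] at hx
      exact ((aux_hasDerivAt x (hsin x hx)).differentiableAt).differentiableWithinAt
    · intro x hx
      rw [interior_Ioo] at hx
      rw [(aux_hasDerivAt x (hsin x hx)).deriv]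
      apply div_nonpos_of_nonpos_of_nonneg _ (sq_nonneg _)
      have h2x : Real.sin x * Real.cos x ≤ x := by
        have := Real.sin_le (by nlinarith [hx.1] : (0:ℝ) ≤ 2 * x)
        have h2 : Real.sin (2 * x) = 2 * Real.sin x * Real.cos x := Real.sin_two_mul x
        linarith
      linarith
  intro a ha b hb hab
  simp only []
  rw [heq a ha, heq b hb]
  exact key ha hb hab

theorem stmt_7 (u : ℝ) (hu : u ∈ Ioo 0 π) :
    AntitoneOn (fun v : ℝ => v * Real.cot (v * u) - Real.cot u) (Ioo (0 : ℝ) 1) := by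
  obtain ⟨hu0, huπ⟩ := hu
  intro a ha b hb hab
  simp only [sub_le_sub_iff_right]
  have hmem : ∀ v ∈ Ioo (0:ℝ) 1, v * u ∈ Ioo 0 π := by
    intro v hv
    constructor
    · exact mul_pos hv.1 hu0
    · calc v * u < 1 * u := by
            exact mul_lt_mul_of_pos_right hv.2 hu0
        _ = u := one_mul u
        _ ≤ π := le_of_lt huπ
  have h := aux_anti (hmem a ha) (hmem b hb)
      (mul_le_mul_of_nonneg_right hab hu0.le)
  -- h : b*u * cot (b*u) ≤ a*u * cot (a*u)
  have hu0' : (0:ℝ) < u := hu0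
  simp only [] at h
  calc b * Real.cot (b * u) = (b * u * Real.cot (b * u)) / u := by
        field_simp
    _ ≤ (a * u * Real.cot (a * u)) / u := by gcongr
    _ = a * Real.cot (a * u) := by field_simp
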